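/- For $\lambda>1$ and all exponents $0<p,q,r<\infty$, $\beta\in\mathbb{R}$, every measurable $f$ on $\mathbb{R}^{d+1}_+$ satisfies the change-of-angle inequality $\Big(\int_0^\infty\Big\|\Big(\fint_{t/2}^t t^{-d}\int_{B(\cdot,\lambda t)}|s^{-\beta}f(s,y)|^r\,dy\,ds\Big)^{1/r}\Big\|_{L^p}^q\frac{dt}{t}\Big)^{1/q}\le C\,\lambda^{d/\min\{p,r\}}\,\|f\|_{Z^{p,q,r}_\beta}$ with $C$ depending only on $p,r,d$. -/

import Mathlib

open MeasureTheory Set ENNReal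

noncomputable section

abbrev Ed (d : ℕ) : Type := EuclideanSpace ℝ (Fin d)

/-- The Whitney box `W(t,x) = (t/2, t) × B(x,t)` in the upper half-space. -/
def WBox (d : ℕ) (t : ℝ) (x : Ed d) : Set (ℝ × Ed d) := Ioo (t/2) t ×ˢ Metric.ball x t

/-- Whitney average `(⨍⨍_{W(t,x)} |s^{-β} f(s,y)|^r dy ds)^{1/r}` (ENNReal-valued). -/
noncomputable def wAvg (d : ℕ) (r β : ℝ) (f : ℝ × Ed d → ℝ) (t : ℝ) (x : Ed d) : ℝ≥0∞ :=
  ((∫⁻ pt in WBox d t x, (ENNReal.ofReal (pt.1 ^ (-β)) * ENNReal.ofReal |f pt|) ^ r)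
      / volume (WBox d t x)) ^ (1 / r)

/-- The quasi-norm of the space `Z^{p,q,r}_β`. -/
noncomputable def Znorm (d : ℕ) (p q r β : ℝ) (f : ℝ × Ed d → ℝ) : ℝ≥0∞ :=
  (∫⁻ t in Ioi (0 : ℝ),
      ((∫⁻ x, wAvg d r β f t x ^ p) ^ (1 / p)) ^ q * ENNReal.ofReal t⁻¹) ^ (1 / q)

/-- The "changed angle" version of the `Z`-quasi-norm, where the Whitney average uses
the enlarged ball `B(x, λt)` but keeps the normalization `t^{-d}` of the unit-angle box:
`(⨍_{t/2}^t t^{-d} ∫_{B(x,λt)} |s^{-β} f|^r dy ds)^{1/r}`. -/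
noncomputable def wAvgAngle (d : ℕ) (lam r β : ℝ) (f : ℝ × Ed d → ℝ) (t : ℝ) (x : Ed d) :
    ℝ≥0∞ :=
  ((∫⁻ pt in Ioo (t / 2) t ×ˢ Metric.ball x (lam * t),
        (ENNReal.ofReal (pt.1 ^ (-β)) * ENNReal.ofReal |f pt|) ^ r)
      / ENNReal.ofReal ((t / 2) * t ^ d)) ^ (1 / r)

noncomputable def ZnormAngle (d : ℕ) (lam p q r β : ℝ) (f : ℝ × Ed d → ℝ) : ℝ≥0∞ :=
  (∫⁻ t in Ioi (0 : ℝ),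
      ((∫⁻ x, wAvgAngle d lam r β f t x ^ p) ^ (1 / p)) ^ q * ENNReal.ofReal t⁻¹) ^ (1 / q)

section Helpers

lemma lintegral_finset_biUnion_le {α ι : Type*} [MeasurableSpace α] (μ : Measure α)
    (g : α → ℝ≥0∞) (S : Finset ι) (A : ι → Set α) :
    ∫⁻ x in ⋃ i ∈ S, A i, g x ∂μ ≤ ∑ i ∈ S, ∫⁻ x in A i, g x ∂μ := by
  classical
  induction S using Finset.induction_on with
  | empty => simp
  | insert a S ha ih =>
      rw [Finset.set_biUnion_insert, Finset.sum_insert ha]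
      exact (lintegral_union_le _ _ _).trans (add_le_add le_rfl ih)

lemma rpow_finset_sum_le {ι : Type*} (S : Finset ι) (a : ι → ℝ≥0∞) {θ : ℝ}
    (h0 : 0 < θ) (h1 : θ ≤ 1) :
    (∑ i ∈ S, a i) ^ θ ≤ ∑ i ∈ S, a i ^ θ := by
  classical
  induction S using Finset.induction_on with
  | empty => simp [ENNReal.zero_rpow_of_pos h0]
  | insert b S ha ih =>
      rw [Finset.sum_insert ha, Finset.sum_insert ha]
      exact (ENNReal.rpow_add_le_add_rpow _ _ h0.le h1).trans (add_le_add le_rfl ih)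

lemma lintegral_Lp_sum_le {α ι : Type*} [MeasurableSpace α] {μ : Measure α}
    (S : Finset ι) (u : ι → α → ℝ≥0∞) (hu : ∀ i, AEMeasurable (u i) μ)
    {s : ℝ} (hs : 1 ≤ s) :
    (∫⁻ x, (∑ i ∈ S, u i x) ^ s ∂μ) ^ (1/s) ≤ ∑ i ∈ S, (∫⁻ x, u i x ^ s ∂μ) ^ (1/s) := by
  classical
  have hs0 : (0:ℝ) < s := lt_of_lt_of_le one_pos hs
  induction S using Finset.induction_on with
  | empty =>
      simp only [Finset.sum_empty, ENNReal.zero_rpow_of_pos hs0, lintegral_zero,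
        ENNReal.zero_rpow_of_pos (show (0:ℝ) < 1/s by positivity), le_refl]
  | insert b S ha ih =>
      simp only [Finset.sum_insert ha]
      refine (ENNReal.lintegral_Lp_add_le (hu b) ?_ hs).trans (add_le_add le_rfl ih)
      exact Finset.aemeasurable_fun_sum _ (fun i _ => hu i)

lemma measurable_setLIntegral_ball (d : ℕ) (g : ℝ × Ed d → ℝ≥0∞) (t : ℝ) :
    Measurable fun x : Ed d => ∫⁻ pt in Ioo (t/2) t ×ˢ Metric.ball x t, g pt := by
  apply LowerSemicontinuous.measurable
  intro x c hc
  simp only at hc ⊢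
  have key : ∀ m n : ℕ, m ≤ n → (1:ℝ)/((n:ℝ)+1) ≤ 1/((m:ℝ)+1) := by
    intro m n h
    apply one_div_le_one_div_of_le (by positivity)
    exact_mod_cast Nat.succ_le_succ h
  have hU : (Ioo (t/2) t ×ˢ Metric.ball x t : Set (ℝ × Ed d))
      = ⋃ n : ℕ, Ioo (t/2) t ×ˢ Metric.ball x (t - 1/(n+1)) := by
    ext pt
    simp only [mem_iUnion, mem_prod, Metric.mem_ball]
    constructor
    · rintro ⟨h1, h2⟩
      obtain ⟨n, hn⟩ := exists_nat_one_div_lt (sub_pos.2 h2)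
      exact ⟨n, h1, by linarith⟩
    · rintro ⟨n, h1, h2⟩
      refine ⟨h1, lt_of_lt_of_le h2 ?_⟩
      have : (0:ℝ) ≤ 1/((n:ℝ)+1) := by positivity
      linarith
  have hdir : Directed (· ⊆ ·)
      (fun n : ℕ => (Ioo (t/2) t ×ˢ Metric.ball x (t - 1/(n+1)) : Set (ℝ × Ed d))) := by
    intro m n
    refine ⟨max m n, prod_mono_right (Metric.ball_subset_ball ?_),
      prod_mono_right (Metric.ball_subset_ball ?_)⟩
    · have h1 := key m (max m n) (le_max_left m n)
      push_cast at h1 ⊢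
      linarith
    · have h1 := key n (max m n) (le_max_right m n)
      push_cast at h1 ⊢
      linarith
  rw [hU, setLIntegral_iUnion_of_directed _ hdir] at hc
  obtain ⟨n, hn⟩ := lt_iSup_iff.1 hc
  have hδ : (0:ℝ) < 1/((n:ℝ)+1) := by positivity
  filter_upwards [Metric.ball_mem_nhds x hδ] with y hy
  refine lt_of_lt_of_le hn (lintegral_mono' (Measure.restrict_mono ?_ le_rfl) le_rfl)
  refine prod_mono_right ?_
  intro z hz
  rw [Metric.mem_ball] at hz hy ⊢
  calc dist z y ≤ dist z x + dist x y := dist_triangle _ _ _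
    _ < (t - 1/((n:ℝ)+1)) + 1/((n:ℝ)+1) := by
        rw [dist_comm x y]; exact add_lt_add hz hy
    _ = t := by ring


lemma exists_cover (d : ℕ) : ∃ Ccov : ℝ, 0 < Ccov ∧ ∀ lam : ℝ, 1 ≤ lam →
    ∃ S : Finset (Ed d), (S.card : ℝ) ≤ Ccov * lam ^ d ∧
      Metric.ball (0 : Ed d) lam ⊆ ⋃ v ∈ S, Metric.ball v 1 := by
  classical
  refine ⟨(2 * d + 7) ^ d, by positivity, fun lam hlam => ?_⟩
  have hlam0 : (0:ℝ) < lam := lt_of_lt_of_le one_pos hlam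
  set M : ℤ := ⌈lam * (d + 1) + 1/2⌉ with hM
  have hM1 : (1:ℤ) ≤ M := by
    rw [hM, Int.one_le_ceil_iff]
    positivity
  have hMle : (M : ℝ) ≤ lam * (d + 1) + 3/2 := by
    have := (Int.ceil_lt_add_one (lam * (d+1) + 1/2)).le
    linarith
  set T : Finset (Fin d → ℤ) := Fintype.piFinset (fun _ => Finset.Icc (-M) M) with hT
  set emb : (Fin d → ℤ) → Ed d := fun v => WithLp.toLp 2 (fun i => (v i : ℝ) / (d + 1) : Fin d → ℝ) with hemb
  refine ⟨T.image emb, ?_, ?_⟩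
  · have h1 : (Finset.Icc (-M) M).card = (2*M+1).toNat := by
      rw [Int.card_Icc]; congr 1; ring
    have h1' : ((Finset.Icc (-M) M).card : ℝ) = ((2*M+1 : ℤ) : ℝ) := by
      rw [h1]
      have h2 : (((2*M+1).toNat : ℤ)) = 2*M+1 := Int.toNat_of_nonneg (by omega)
      exact_mod_cast h2
    have hcard : (T.card : ℝ) = ((2 * M + 1 : ℤ) : ℝ) ^ d := by
      rw [hT, Fintype.card_piFinset]
      simp only [Finset.prod_const, Finset.card_univ, Fintype.card_fin]
      rw [← h1']
      push_cast; ring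
    have h2 : ((2 * M + 1 : ℤ) : ℝ) ≤ (2 * d + 7) * lam := by
      push_cast
      nlinarith [Nat.cast_nonneg (α := ℝ) d]
    calc ((T.image emb).card : ℝ) ≤ (T.card : ℝ) := by exact_mod_cast Finset.card_image_le
      _ = ((2 * M + 1 : ℤ) : ℝ) ^ d := hcard
      _ ≤ ((2 * d + 7) * lam) ^ d := by
          apply pow_le_pow_left₀ _ h2
          positivity
      _ = (2 * d + 7) ^ d * lam ^ d := mul_pow _ _ _
  · intro y hy
    have hynorm : ‖y‖ < lam := by rwa [mem_ball_zero_iff] at hy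
    have hcoord : ∀ i, |y i| ≤ ‖y‖ := by
      intro i
      rw [EuclideanSpace.norm_eq]
      have h1 : |y i| = Real.sqrt (‖y i‖ ^ 2) := by
        rw [Real.sqrt_sq_eq_abs, Real.norm_eq_abs, abs_abs]
      rw [h1]
      apply Real.sqrt_le_sqrt
      exact Finset.single_le_sum (f := fun j => ‖y j‖ ^ 2) (fun j _ => sq_nonneg _)
        (Finset.mem_univ i)
    set v : Fin d → ℤ := fun i => round (y i * ((d:ℝ) + 1)) with hv
    have hvT : v ∈ T := by
      rw [hT, Fintype.mem_piFinset]
      intro i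
      rw [Finset.mem_Icc]
      have h2 : |(v i : ℝ)| ≤ |y i * ((d:ℝ)+1)| + 1/2 := by
        have h := abs_sub_round (y i * ((d:ℝ)+1))
        have he : ((v i : ℝ)) =
            y i * ((d:ℝ)+1) - (y i * ((d:ℝ)+1) - (round (y i * ((d:ℝ)+1)) : ℝ)) := by
          simp only [hv]; ring
        rw [he]
        exact (abs_sub _ _).trans (by linarith)
      have h3 : |y i * ((d:ℝ)+1)| ≤ lam * (d+1) := by
        rw [abs_mul, abs_of_pos (by positivity : (0:ℝ) < (d:ℝ)+1)]
        have := (hcoord i).trans hynorm.le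
        nlinarith [abs_nonneg (y i), Nat.cast_nonneg (α := ℝ) d]
      have h4 : |(v i : ℝ)| ≤ (M : ℝ) := by
        have hce := Int.le_ceil (lam * ((d:ℝ)+1) + 1/2)
        rw [hM]
        push_cast at hce ⊢
        linarith
      have h5 : |v i| ≤ M := by rwa [← Int.cast_abs, Int.cast_le] at h4
      exact abs_le.1 h5
    refine mem_iUnion₂.2 ⟨emb v, Finset.mem_image_of_mem emb hvT, ?_⟩
    rw [Metric.mem_ball, EuclideanSpace.dist_eq, Real.sqrt_lt' one_pos, one_pow]
    have hterm : ∀ i, dist (y i) (emb v i) ^ 2 ≤ (1/2)^2 / ((d:ℝ)+1)^2 := by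
      intro i
      have hd1 : (0:ℝ) < (d:ℝ) + 1 := by positivity
      have h6 : dist (y i) (emb v i) = |y i - (v i : ℝ)/((d:ℝ)+1)| := Real.dist_eq _ _
      have h6' : dist (y i) (emb v i) = |y i * ((d:ℝ)+1) - (v i : ℝ)| / ((d:ℝ)+1) := by
        have harg : y i - (v i : ℝ)/((d:ℝ)+1) = (y i * ((d:ℝ)+1) - (v i : ℝ))/((d:ℝ)+1) := by
          field_simp
        rw [h6, harg, abs_div, abs_of_pos hd1]
      rw [h6', div_pow]
      have h7 : |y i * ((d:ℝ)+1) - (v i : ℝ)| ≤ 1/2 := by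
        have := abs_sub_round (y i * ((d:ℝ)+1))
        simpa only [hv] using this
      gcongr

    have hpos : (0:ℝ) < ((d:ℝ)+1)^2 := by positivity
    calc ∑ i, dist (y i) (emb v i) ^ 2 ≤ ∑ _i : Fin d, (1/2:ℝ)^2 / ((d:ℝ)+1)^2 :=
          Finset.sum_le_sum (fun i _ => hterm i)
      _ = ((d:ℝ) * (1/2:ℝ)^2) / ((d:ℝ)+1)^2 := by
          rw [Finset.sum_const, Finset.card_univ, Fintype.card_fin, nsmul_eq_mul]; ring
      _ < 1 := by
          rw [div_lt_one hpos]
          nlinarith [Nat.cast_nonneg (α := ℝ) d]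

end Helpers

/-- change of angle. For `λ > 1` the `Z`-quasi-norm with Whitney averages
over the enlarged balls `B(x, λt)` (normalized by `t^{-d}`) is controlled by
`C λ^{d / min(p,r)}` times the `Z^{p,q,r}_β`-quasi-norm, with `C = C(p,r,d)`. -/


theorem change_of_angle (d : ℕ) (p r : ℝ) (hp : 0 < p) (hr : 0 < r) :
    ∃ C : ℝ, 0 < C ∧ ∀ (q β lam : ℝ), 0 < q → 1 < lam → ∀ f : ℝ × Ed d → ℝ,
      ZnormAngle d lam p q r β f
        ≤ ENNReal.ofReal (C * lam ^ ((d : ℝ) / min p r)) * Znorm d p q r β f := by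
  classical
  obtain ⟨Ccov, hCcov, hcov⟩ := exists_cover d
  set m : ℝ := min p r with hmdef
  have hm0 : 0 < m := lt_min hp hr
  have hmp : m ≤ p := min_le_left _ _
  have hmr : m ≤ r := min_le_right _ _
  set c : ℝ≥0∞ := volume (Metric.ball (0 : Ed d) 1) with hcdef
  have hc0 : c ≠ 0 := (Metric.measure_ball_pos volume (0 : Ed d) one_pos).ne'
  have hcT : c ≠ ⊤ := measure_ball_lt_top.ne
  have hctR : 0 < c.toReal := ENNReal.toReal_pos hc0 hcT
  set θ : ℝ := m / r with hθdef
  have hθ0 : 0 < θ := div_pos hm0 hr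
  have hθ1 : θ ≤ 1 := by rw [hθdef, div_le_one hr]; exact hmr
  set s : ℝ := p / m with hsdef
  have hs1 : 1 ≤ s := by rw [hsdef, le_div_iff₀ hm0, one_mul]; exact hmp
  have hs0 : 0 < s := lt_of_lt_of_le one_pos hs1
  have hms : m * s = p := by rw [hsdef]; field_simp
  have hsm' : 1/s * (1/m) = 1/p := by
    rw [div_mul_div_comm, one_mul, mul_comm s m, hms]
  set C : ℝ := Ccov ^ (1/m) * c.toReal ^ (1/r) with hCdef
  refine ⟨C, by positivity, ?_⟩
  intro q β lam hq hlam f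
  have hlam0 : (0:ℝ) < lam := lt_of_lt_of_le one_pos hlam.le
  set K : ℝ≥0∞ := ENNReal.ofReal (C * lam ^ ((d : ℝ) / m)) with hKdef
  have hKT : K ≠ ⊤ := ENNReal.ofReal_ne_top
  set G : ℝ × Ed d → ℝ≥0∞ :=
    fun pt => (ENNReal.ofReal (pt.1 ^ (-β)) * ENNReal.ofReal |f pt|) ^ r with hG
  -- pointwise (in t) inequality between the L^p norms
  have key : ∀ t : ℝ, t ∈ Ioi (0:ℝ) →
      (∫⁻ x, wAvgAngle d lam r β f t x ^ p) ^ (1/p)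
        ≤ K * (∫⁻ x, wAvg d r β f t x ^ p) ^ (1/p) := by
    intro t ht
    rw [mem_Ioi] at ht
    obtain ⟨S, hScard, hScover⟩ := hcov lam hlam.le
    set W : ℝ≥0∞ := ENNReal.ofReal ((t/2) * t^d) with hWdef
    set V : ℝ≥0∞ := W * c with hVdef
    have hVol : ∀ z : Ed d, volume (WBox d t z) = V := by
      intro z
      have h1 : volume (WBox d t z) = volume (Ioo (t/2) t) * volume (Metric.ball z t) := by
        rw [WBox, Measure.volume_eq_prod, Measure.prod_prod]
      rw [h1, Real.volume_Ioo, Measure.addHaar_ball_of_pos volume z ht,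
        finrank_euclideanSpace_fin, hVdef, hWdef,
        ENNReal.ofReal_mul (by positivity : (0:ℝ) ≤ t/2)]
      have h2 : t - t/2 = t/2 := by ring
      rw [h2, mul_assoc]
    -- the enlarged box is covered by translated Whitney boxes
    have hIle : ∀ x : Ed d,
        (∫⁻ pt in Ioo (t/2) t ×ˢ Metric.ball x (lam*t), G pt)
          ≤ ∑ v ∈ S, ∫⁻ pt in WBox d t (x + t • v), G pt := by
      intro x
      refine le_trans (lintegral_mono' (Measure.restrict_mono ?_ le_rfl) le_rfl)
        (lintegral_finset_biUnion_le _ _ S (fun v => WBox d t (x + t • v)))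
      rintro ⟨a, y⟩ ⟨ha, hy⟩
      have hy' : dist y x < lam * t := Metric.mem_ball.1 hy
      set w : Ed d := t⁻¹ • (y - x) with hwdef
      have hwn : ‖w‖ < lam := by
        rw [hwdef, norm_smul, Real.norm_eq_abs, abs_of_pos (inv_pos.2 ht), ← dist_eq_norm]
        calc t⁻¹ * dist y x < t⁻¹ * (lam * t) := by
              exact mul_lt_mul_of_pos_left hy' (inv_pos.2 ht)
          _ = lam := by field_simp
      obtain ⟨v, hvS, hv1⟩ := mem_iUnion₂.1 (hScover (mem_ball_zero_iff.2 hwn))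
      refine mem_iUnion₂.2 ⟨v, hvS, ⟨ha, ?_⟩⟩
      have hdiff : y - (x + t • v) = t • (w - v) := by
        rw [smul_sub, hwdef, smul_inv_smul₀ ht.ne']
        abel
      have hwv : ‖w - v‖ < 1 := by
        rw [← dist_eq_norm]
        exact Metric.mem_ball.1 hv1
      rw [Metric.mem_ball, dist_eq_norm, hdiff, norm_smul, Real.norm_eq_abs, abs_of_pos ht]
      calc t * ‖w - v‖ < t * 1 := mul_lt_mul_of_pos_left hwv ht
        _ = t := mul_one t
    have hwAvg : ∀ z : Ed d,
        wAvg d r β f t z = ((∫⁻ pt in WBox d t z, G pt) / V) ^ (1/r) := by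
      intro z
      simp only [wAvg, hG, hVol z]
    -- pointwise bound for the m-th powers
    have hpt : ∀ x : Ed d, wAvgAngle d lam r β f t x ^ m
        ≤ ∑ v ∈ S, c ^ θ * wAvg d r β f t (x + t • v) ^ m := by
      intro x
      have h1 : wAvgAngle d lam r β f t x ^ m
          = ((∫⁻ pt in Ioo (t/2) t ×ˢ Metric.ball x (lam*t), G pt) / W) ^ θ := by
        simp only [wAvgAngle, hG, hWdef]
        rw [← ENNReal.rpow_mul, one_div_mul_eq_div]
      have h2 : ∀ z : Ed d, wAvg d r β f t z ^ m
          = ((∫⁻ pt in WBox d t z, G pt) / V) ^ θ := by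
        intro z
        rw [hwAvg z, ← ENNReal.rpow_mul, one_div_mul_eq_div]
      rw [h1]
      calc ((∫⁻ pt in Ioo (t/2) t ×ˢ Metric.ball x (lam*t), G pt) / W) ^ θ
          ≤ ((∑ v ∈ S, ∫⁻ pt in WBox d t (x + t • v), G pt) / W) ^ θ :=
            ENNReal.rpow_le_rpow (ENNReal.div_le_div_right (hIle x) W) hθ0.le
        _ = (∑ v ∈ S, (∫⁻ pt in WBox d t (x + t • v), G pt) / W) ^ θ := by
            simp only [div_eq_mul_inv, Finset.sum_mul]
        _ = (∑ v ∈ S, c * ((∫⁻ pt in WBox d t (x + t • v), G pt) / V)) ^ θ := by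
            congr 1
            refine Finset.sum_congr rfl (fun v _ => ?_)
            rw [hVdef]
            rw [show c * ((∫⁻ pt in WBox d t (x + t • v), G pt) / (W * c))
              = ((∫⁻ pt in WBox d t (x + t • v), G pt) * c) / (W * c) by
                rw [div_eq_mul_inv, div_eq_mul_inv]; ring]
            rw [ENNReal.mul_div_mul_right _ _ hc0 hcT]
        _ ≤ ∑ v ∈ S, (c * ((∫⁻ pt in WBox d t (x + t • v), G pt) / V)) ^ θ :=
            rpow_finset_sum_le S _ hθ0 hθ1
        _ = ∑ v ∈ S, c ^ θ * wAvg d r β f t (x + t • v) ^ m := by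
            refine Finset.sum_congr rfl (fun v _ => ?_)
            rw [ENNReal.mul_rpow_of_nonneg _ _ hθ0.le, h2]
    -- measurability of the translated averages
    have hmeas : ∀ v : Ed d, AEMeasurable
        (fun x : Ed d => c ^ θ * wAvg d r β f t (x + t • v) ^ m) volume := by
      intro v
      have h1 : Measurable fun z : Ed d => ∫⁻ pt in WBox d t z, G pt := by
        have := measurable_setLIntegral_ball d G t
        simpa only [WBox] using this
      have h2 : Measurable fun x : Ed d => x + t • v :=
        measurable_id.add_const _
      have h3 : Measurable fun x : Ed d => wAvg d r β f t (x + t • v) := by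
        have h4 : (fun x : Ed d => wAvg d r β f t (x + t • v))
            = fun x => ((∫⁻ pt in WBox d t (x + t • v), G pt) / V) ^ (1/r) := by
          funext x; rw [hwAvg]
        rw [h4]
        exact (((h1.comp h2).div_const V).pow_const _)
      exact (measurable_const.mul (h3.pow_const m)).aemeasurable
    -- put everything together
    set Qint : ℝ≥0∞ := ∫⁻ x, wAvg d r β f t x ^ p with hQdef
    have htrans : ∀ v : Ed d,
        (∫⁻ x, wAvg d r β f t (x + t • v) ^ p) = Qint := by
      intro v
      exact lintegral_add_right_eq_self (fun x => wAvg d r β f t x ^ p) (t • v)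
    have hterm : ∀ v : Ed d,
        (∫⁻ x, (c ^ θ * wAvg d r β f t (x + t • v) ^ m) ^ s) ^ (1/s)
          = c ^ θ * Qint ^ (1/s) := by
      intro v
      have h1 : ∀ x : Ed d, (c ^ θ * wAvg d r β f t (x + t • v) ^ m) ^ s
          = (c ^ θ) ^ s * wAvg d r β f t (x + t • v) ^ p := by
        intro x
        rw [ENNReal.mul_rpow_of_nonneg _ _ hs0.le,
          ← ENNReal.rpow_mul (wAvg d r β f t (x + t • v)) m s, hms]
      simp only [h1]
      rw [lintegral_const_mul' _ _ (ENNReal.rpow_ne_top_of_nonneg hs0.le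
        (ENNReal.rpow_ne_top_of_nonneg hθ0.le hcT)), htrans v,
        ENNReal.mul_rpow_of_nonneg _ _ (by positivity : (0:ℝ) ≤ 1/s),
        ← ENNReal.rpow_mul, mul_one_div_cancel hs0.ne', ENNReal.rpow_one]
    have hmain : (∫⁻ x, wAvgAngle d lam r β f t x ^ p) ^ (1/p)
        ≤ ((S.card : ℝ≥0∞) * (c ^ θ * Qint ^ (1/s))) ^ (1/m) := by
      have h0 : (∫⁻ x, wAvgAngle d lam r β f t x ^ p) ^ (1/p)
          = ((∫⁻ x, (wAvgAngle d lam r β f t x ^ m) ^ s) ^ (1/s)) ^ (1/m) := by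
        have h1 : ∀ x : Ed d, wAvgAngle d lam r β f t x ^ p
            = (wAvgAngle d lam r β f t x ^ m) ^ s := by
          intro x; rw [← ENNReal.rpow_mul, hms]
        simp only [h1]
        rw [← ENNReal.rpow_mul (∫⁻ x, (wAvgAngle d lam r β f t x ^ m) ^ s) (1/s) (1/m), hsm']
      rw [h0]
      refine ENNReal.rpow_le_rpow ?_ (by positivity : (0:ℝ) ≤ 1/m)
      calc (∫⁻ x, (wAvgAngle d lam r β f t x ^ m) ^ s) ^ (1/s)
          ≤ (∫⁻ x, (∑ v ∈ S, c ^ θ * wAvg d r β f t (x + t • v) ^ m) ^ s) ^ (1/s) := by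
            refine ENNReal.rpow_le_rpow (lintegral_mono (fun x => ?_)) (by positivity)
            exact ENNReal.rpow_le_rpow (hpt x) hs0.le
        _ ≤ ∑ v ∈ S, (∫⁻ x, (c ^ θ * wAvg d r β f t (x + t • v) ^ m) ^ s) ^ (1/s) :=
            lintegral_Lp_sum_le S _ hmeas hs1
        _ = ∑ _v ∈ S, c ^ θ * Qint ^ (1/s) := Finset.sum_congr rfl (fun v _ => hterm v)
        _ = (S.card : ℝ≥0∞) * (c ^ θ * Qint ^ (1/s)) := by
            rw [Finset.sum_const, nsmul_eq_mul]
    -- now estimate the constant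
    have hconst : ((S.card : ℝ≥0∞) * (c ^ θ * Qint ^ (1/s))) ^ (1/m)
        ≤ K * Qint ^ (1/p) := by
      rw [ENNReal.mul_rpow_of_nonneg _ _ (by positivity : (0:ℝ) ≤ 1/m),
        ENNReal.mul_rpow_of_nonneg _ _ (by positivity : (0:ℝ) ≤ 1/m),
        ← ENNReal.rpow_mul c, ← ENNReal.rpow_mul Qint]
      have hθm : θ * (1/m) = 1/r := by
        rw [hθdef, div_mul_div_comm, mul_one, mul_comm r m]
        rw [div_eq_div_iff (by positivity) (by positivity)]
        ring
      rw [hθm, hsm', ← mul_assoc]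
      refine mul_le_mul_left ?_ _
      have hcardK : ((S.card : ℝ≥0∞)) ^ (1/m) ≤ ENNReal.ofReal ((Ccov * lam ^ d) ^ (1/m)) := by
        rw [← ENNReal.ofReal_rpow_of_nonneg (by positivity) (by positivity : (0:ℝ) ≤ 1/m)]
        refine ENNReal.rpow_le_rpow ?_ (by positivity)
        rw [← ENNReal.ofReal_natCast]
        exact ENNReal.ofReal_le_ofReal hScard
      have hcK : c ^ (1/r) = ENNReal.ofReal (c.toReal ^ (1/r)) := by
        conv_lhs => rw [← ENNReal.ofReal_toReal hcT]
        rw [ENNReal.ofReal_rpow_of_nonneg ENNReal.toReal_nonneg (by positivity : (0:ℝ) ≤ 1/r)]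
      calc ((S.card : ℝ≥0∞)) ^ (1/m) * c ^ (1/r)
          ≤ ENNReal.ofReal ((Ccov * lam ^ d) ^ (1/m)) * ENNReal.ofReal (c.toReal ^ (1/r)) := by
            rw [hcK]
            exact mul_le_mul_left hcardK _
        _ = ENNReal.ofReal ((Ccov * lam ^ d) ^ (1/m) * c.toReal ^ (1/r)) := by
            rw [← ENNReal.ofReal_mul (by positivity)]
        _ = K := by
            rw [hKdef]
            congr 1
            rw [Real.mul_rpow hCcov.le (by positivity : (0:ℝ) ≤ lam ^ d), hCdef]
            rw [← Real.rpow_natCast lam d, ← Real.rpow_mul hlam0.le]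
            ring_nf
    exact hmain.trans hconst
  -- wrap up the q-integral
  rw [ZnormAngle, Znorm]
  have hmono : (∫⁻ t in Ioi (0:ℝ),
        ((∫⁻ x, wAvgAngle d lam r β f t x ^ p) ^ (1/p)) ^ q * ENNReal.ofReal t⁻¹)
      ≤ K ^ q * ∫⁻ t in Ioi (0:ℝ),
        ((∫⁻ x, wAvg d r β f t x ^ p) ^ (1/p)) ^ q * ENNReal.ofReal t⁻¹ := by
    rw [← lintegral_const_mul' _ _ (ENNReal.rpow_ne_top_of_nonneg hq.le hKT)]
    refine lintegral_mono_ae ?_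
    filter_upwards [ae_restrict_mem measurableSet_Ioi] with t ht
    calc ((∫⁻ x, wAvgAngle d lam r β f t x ^ p) ^ (1/p)) ^ q * ENNReal.ofReal t⁻¹
        ≤ (K * (∫⁻ x, wAvg d r β f t x ^ p) ^ (1/p)) ^ q * ENNReal.ofReal t⁻¹ :=
          mul_le_mul_left (ENNReal.rpow_le_rpow (key t ht) hq.le) _
      _ = K ^ q * (((∫⁻ x, wAvg d r β f t x ^ p) ^ (1/p)) ^ q * ENNReal.ofReal t⁻¹) := by
          rw [ENNReal.mul_rpow_of_nonneg _ _ hq.le, mul_assoc]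
  calc (∫⁻ t in Ioi (0:ℝ),
        ((∫⁻ x, wAvgAngle d lam r β f t x ^ p) ^ (1/p)) ^ q * ENNReal.ofReal t⁻¹) ^ (1/q)
      ≤ (K ^ q * ∫⁻ t in Ioi (0:ℝ),
        ((∫⁻ x, wAvg d r β f t x ^ p) ^ (1/p)) ^ q * ENNReal.ofReal t⁻¹) ^ (1/q) :=
        ENNReal.rpow_le_rpow hmono (by positivity)
    _ = K * (∫⁻ t in Ioi (0:ℝ),
        ((∫⁻ x, wAvg d r β f t x ^ p) ^ (1/p)) ^ q * ENNReal.ofReal t⁻¹) ^ (1/q) := by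
        rw [ENNReal.mul_rpow_of_nonneg _ _ (by positivity : (0:ℝ) ≤ 1/q),
          ← ENNReal.rpow_mul, mul_one_div_cancel hq.ne', ENNReal.rpow_one]


end
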